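/- Assume the domain D ⊆ ℝ^d satisfies condition (A) with constant r₀ > 0 and condition (B) with constants δ > 0, β ≥ 1, and set γ = 2 r₀ β^{−1}. Then there exists a constant K > 0 such that for every z₀ ∈ ∂D there exists a C² function f : ℝ^d → ℝ with sup-norms of f, Df, D²f bounded by K, satisfying ⟨y − x, n⟩ + (1/γ) ⟨(Df)(x), n⟩ |y − x|² ≥ 0 for every x ∈ B(z₀, δ) ∩ ∂D, every y ∈ cl(D), and every n ∈ N_x. -/

import Mathlib

open MeasureTheory ProbabilityTheory Set RealInnerProductSpace

set_option maxHeartbeats 1000000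

noncomputable section

/-- `d`-dimensional Euclidean space. -/
abbrev Euc (d : ℕ) := EuclideanSpace ℝ (Fin d)

/-- The set `N_{x,r}` of inward unit normal vectors at `x` with radius `r`:
`{n : ‖n‖ = 1, B(x - r n, r) ∩ D = ∅}`. -/
def normalSet {d : ℕ} (D : Set (Euc d)) (x : Euc d) (r : ℝ) : Set (Euc d) :=
  {n | ‖n‖ = 1 ∧ Metric.ball (x - r • n) r ∩ D = ∅}

/-- The set `N_x = ⋃_{r>0} N_{x,r}` of inward unit normal vectors at `x`. -/
def normalCone {d : ℕ} (D : Set (Euc d)) (x : Euc d) : Set (Euc d) :=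
  ⋃ r > 0, normalSet D x r

/-- Condition (A) with constant `r₀`. -/
def CondA {d : ℕ} (D : Set (Euc d)) (r₀ : ℝ) : Prop :=
  ∀ x ∈ frontier D, normalCone D x = normalSet D x r₀ ∧ (normalSet D x r₀).Nonempty

/-- Condition (B) with constants `δ`, `β`. -/
def CondB {d : ℕ} (D : Set (Euc d)) (δ β : ℝ) : Prop :=
  ∀ x ∈ frontier D, ∃ l : Euc d, ‖l‖ = 1 ∧
    ∀ y ∈ Metric.ball x δ ∩ frontier D, ∀ n ∈ normalCone D y, 1 / β ≤ ⟪l, n⟫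

/-- under conditions (A) and (B), with `γ = 2 r₀ β⁻¹`, there is a constant
`K > 0` such that each `z₀ ∈ ∂D` admits a `C²` function `f` with `f`, `Df`, `D²f` bounded
by `K` and `⟨y − x, n⟩ + (1/γ)⟨(Df)(x), n⟩ |y − x|² ≥ 0` for all `x ∈ B(z₀,δ) ∩ ∂D`,
`y ∈ cl(D)`, `n ∈ N_x`. -/
theorem stmt9 {d : ℕ} (D : Set (Euc d)) (hDopen : IsOpen D) (hDconn : IsConnected D)
    (r₀ δ β : ℝ) (hr₀ : 0 < r₀) (hδ : 0 < δ) (hβ : 1 ≤ β)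
    (hA : CondA D r₀) (hB : CondB D δ β) (γ : ℝ) (hγ : γ = 2 * r₀ * β⁻¹) :
    ∃ K > 0, ∀ z₀ ∈ frontier D, ∃ f : Euc d → ℝ,
      ContDiff ℝ 2 f ∧
      (∀ x, |f x| ≤ K ∧ ‖fderiv ℝ f x‖ ≤ K ∧ ‖fderiv ℝ (fderiv ℝ f) x‖ ≤ K) ∧
      ∀ x ∈ Metric.ball z₀ δ ∩ frontier D, ∀ y ∈ closure D, ∀ n ∈ normalCone D x,
        0 ≤ ⟪y - x, n⟫ + (1 / γ) * ⟪gradient f x, n⟫ * ‖y - x‖ ^ 2 := by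
  have hc0 : (0:ℝ) < 1 + δ ^ 2 := by positivity
  refine ⟨2 * (1 + δ ^ 2), by positivity, ?_⟩
  intro z₀ hz₀
  obtain ⟨l, hl, hlB⟩ := hB z₀ hz₀
  set c : ℝ := 1 + δ ^ 2 with hcdef
  set g : Euc d → ℝ := fun x => ⟪l, x⟫ - ⟪l, z₀⟫ with hgdef
  set f : Euc d → ℝ := fun x => c * Real.arctan (g x) with hfdef
  -- derivative of g
  have hgd : ∀ x, HasFDerivAt g (innerSL ℝ l) x := fun x =>
    ((innerSL ℝ l).hasFDerivAt).sub_const _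
  have hpos : ∀ t : ℝ, (0:ℝ) < 1 + t ^ 2 := fun t => by positivity
  -- derivative of f
  have hfd : ∀ x, HasFDerivAt f ((c / (1 + g x ^ 2)) • innerSL ℝ l) x := by
    intro x
    have h1 : HasDerivAt (fun t => c * Real.arctan t) (c * (1 / (1 + g x ^ 2))) (g x) :=
      (Real.hasDerivAt_arctan (g x)).const_mul c
    have := h1.comp_hasFDerivAt x (hgd x)
    rw [mul_one_div] at this
    exact this
  have hfderiv : (fun x => fderiv ℝ f x) = fun x => (c / (1 + g x ^ 2)) • innerSL ℝ l :=
    funext fun x => (hfd x).fderiv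
  -- gradient of f
  have hgrad : ∀ x, gradient f x = (c / (1 + g x ^ 2)) • l := by
    intro x
    refine HasGradientAt.gradient ?_
    rw [hasGradientAt_iff_hasFDerivAt]
    refine (hfd x).congr_fderiv ?_
    ext n
    simp [InnerProductSpace.toDual_apply_apply, real_inner_smul_left]
  -- second derivative
  have hfd2 : ∀ x, HasFDerivAt (fun x => fderiv ℝ f x)
      (ContinuousLinearMap.smulRight
        ((-(c * (2 * g x)) / (1 + g x ^ 2) ^ 2) • innerSL ℝ l) (innerSL ℝ l)) x := by
    intro x
    rw [hfderiv]
    have hs : HasDerivAt (fun t : ℝ => c / (1 + t ^ 2))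
        ((0 * (1 + g x ^ 2) - c * (2 * g x)) / (1 + g x ^ 2) ^ 2) (g x) := by
      have h1 : HasDerivAt (fun t : ℝ => (1:ℝ) + t ^ 2) (2 * g x) (g x) := by
        simpa using ((hasDerivAt_pow 2 (g x)).const_add 1)
      exact (hasDerivAt_const (g x) c).div h1 (hpos (g x)).ne'
    have hsF : HasFDerivAt (fun x => c / (1 + g x ^ 2))
        ((-(c * (2 * g x)) / (1 + g x ^ 2) ^ 2) • innerSL ℝ l) x := by
      have := hs.comp_hasFDerivAt x (hgd x)
      simp only [zero_mul, zero_sub] at this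
      exact this
    have := hsF.smul (hasFDerivAt_const (innerSL ℝ l) x)
    simp only [smul_zero, add_zero, zero_add] at this
    exact this
  refine ⟨f, ?_, ?_, ?_⟩
  · -- ContDiff
    exact contDiff_const.mul (Real.contDiff_arctan.comp
      (((innerSL ℝ l).contDiff).sub contDiff_const))
  · -- bounds
    intro x
    have hLnorm : ‖innerSL ℝ l‖ = 1 := by rw [innerSL_apply_norm, hl]
    have hb1 : |f x| ≤ 2 * c := by
      have h1 : |Real.arctan (g x)| ≤ 2 := by
        have := Real.arctan_mem_Ioo (g x)
        have hpi : Real.pi / 2 ≤ 2 := by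
          nlinarith [Real.pi_le_four]
        rw [abs_le]
        constructor <;> nlinarith [this.1, this.2]
      calc |f x| = c * |Real.arctan (g x)| := by
            rw [hfdef]; rw [abs_mul, abs_of_pos hc0]
        _ ≤ c * 2 := by nlinarith
        _ = 2 * c := by ring
    have hfrac : ∀ t : ℝ, |c / (1 + t ^ 2)| ≤ c := by
      intro t
      rw [abs_div, abs_of_pos hc0, abs_of_pos (hpos t), div_le_iff₀ (hpos t)]
      nlinarith [sq_nonneg t]
    have hb2 : ‖fderiv ℝ f x‖ ≤ 2 * c := by
      rw [(hfd x).fderiv, norm_smul, Real.norm_eq_abs, hLnorm, mul_one]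
      nlinarith [hfrac (g x)]
    have hb3 : ‖fderiv ℝ (fderiv ℝ f) x‖ ≤ 2 * c := by
      rw [(hfd2 x).fderiv, ContinuousLinearMap.norm_smulRight_apply, hLnorm, mul_one,
        norm_smul, Real.norm_eq_abs, hLnorm, mul_one]
      have h2 : |(-(c * (2 * g x)) / (1 + g x ^ 2) ^ 2)| ≤ c := by
        rw [abs_div, abs_neg, abs_mul, abs_of_pos hc0, abs_of_pos (pow_pos (hpos (g x)) 2),
          div_le_iff₀ (pow_pos (hpos (g x)) 2)]
        have habs : |2 * g x| ≤ 1 + g x ^ 2 := by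
          rw [abs_mul, abs_two]
          nlinarith [sq_nonneg (|g x| - 1), sq_abs (g x), abs_nonneg (g x)]
        have h4 : (1 + g x ^ 2) ≤ (1 + g x ^ 2) ^ 2 := by nlinarith [sq_nonneg (g x)]
        calc c * |2 * g x| ≤ c * (1 + g x ^ 2) := mul_le_mul_of_nonneg_left habs hc0.le
          _ ≤ c * (1 + g x ^ 2) ^ 2 := mul_le_mul_of_nonneg_left h4 hc0.le
      linarith
    exact ⟨hb1, hb2, hb3⟩
  · -- the inequality
    intro x hx y hy n hn
    obtain ⟨hxball, hxfr⟩ := hx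
    -- n belongs to normalSet D x r₀
    have hnr : n ∈ normalSet D x r₀ := by
      rw [← (hA x hxfr).1]; exact hn
    obtain ⟨hn1, hn2⟩ := hnr
    -- geometric inequality
    have hyb : y ∉ Metric.ball (x - r₀ • n) r₀ := by
      intro hyball
      have : y ∈ closure (Metric.ball (x - r₀ • n) r₀ ∩ D) :=
        Metric.isOpen_ball.inter_closure ⟨hyball, hy⟩
      rw [hn2] at this
      simpa using this
    have hdist : r₀ ≤ ‖y - (x - r₀ • n)‖ := by
      by_contra h
      push_neg at h
      exact hyb (by simpa [Metric.mem_ball, dist_eq_norm] using h)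
    have hexp : y - (x - r₀ • n) = (y - x) + r₀ • n := by abel
    have hsq : r₀ ^ 2 ≤ ‖y - x‖ ^ 2 + 2 * (r₀ * ⟪y - x, n⟫) + r₀ ^ 2 := by
      have h1 : r₀ ^ 2 ≤ ‖y - (x - r₀ • n)‖ ^ 2 := by
        nlinarith [norm_nonneg (y - (x - r₀ • n))]
      rw [hexp, norm_add_sq_real, real_inner_smul_right, norm_smul, Real.norm_eq_abs,
        abs_of_pos hr₀, hn1, mul_one] at h1
      linarith
    have hgeo : -(‖y - x‖ ^ 2) ≤ 2 * r₀ * ⟪y - x, n⟫ := by linarith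
    -- inner product with gradient
    have hln : 1 / β ≤ ⟪l, n⟫ := hlB x ⟨hxball, hxfr⟩ n hn
    have hβ0 : (0:ℝ) < β := lt_of_lt_of_le one_pos hβ
    have hgx : |g x| ≤ δ := by
      have : g x = ⟪l, x - z₀⟫ := by rw [hgdef]; simp [inner_sub_right]
      rw [this]
      calc |⟪l, x - z₀⟫| ≤ ‖l‖ * ‖x - z₀‖ := abs_real_inner_le_norm l (x - z₀)
        _ ≤ δ := by
            rw [hl, one_mul]
            have := hxball
            rw [Metric.mem_ball, dist_eq_norm] at this
            linarith
    have hs1 : (1:ℝ) ≤ c / (1 + g x ^ 2) := by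
      rw [le_div_iff₀ (hpos (g x)), one_mul, hcdef]
      nlinarith [abs_mul_abs_self (g x), mul_self_le_mul_self (abs_nonneg (g x)) hgx]
    have hginner : 1 / β ≤ ⟪gradient f x, n⟫ := by
      rw [hgrad x, real_inner_smul_left]
      have h1 : (0:ℝ) < 1 / β := by positivity
      calc 1 / β = 1 * (1 / β) := (one_mul _).symm
        _ ≤ (c / (1 + g x ^ 2)) * ⟪l, n⟫ := by
            apply mul_le_mul hs1 hln (le_of_lt h1) (le_trans zero_le_one hs1)
    have hγval : 1 / γ = β / (2 * r₀) := by
      rw [hγ]; field_simp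
    have h5 : 1 ≤ β * ⟪gradient f x, n⟫ := by
      have h := mul_le_mul_of_nonneg_left hginner hβ0.le
      calc (1:ℝ) = β * (1 / β) := by field_simp
        _ ≤ _ := h
    have h2 : (0:ℝ) ≤ ‖y - x‖ ^ 2 := sq_nonneg _
    have hkey : 0 ≤ 2 * r₀ * ⟪y - x, n⟫ + β * ⟪gradient f x, n⟫ * ‖y - x‖ ^ 2 := by
      nlinarith [hgeo, mul_nonneg (sub_nonneg.2 h5) h2]
    have h2r : (0:ℝ) < 2 * r₀ := by positivity
    rw [hγval]
    have heq : ⟪y - x, n⟫ + β / (2 * r₀) * ⟪gradient f x, n⟫ * ‖y - x‖ ^ 2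
        = (2 * r₀ * ⟪y - x, n⟫ + β * ⟪gradient f x, n⟫ * ‖y - x‖ ^ 2) / (2 * r₀) := by
      have hr0ne : r₀ ≠ 0 := hr₀.ne'
      field_simp
      try ring
    rw [heq]
    exact div_nonneg hkey h2r.le

end
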